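/- For k ≥ 8 and n = k³ (more generally k = ⌊n^{2/3}⌋), the cyclically invariant function f defined by cyclic occurrence of the pattern g satisfies s(f) = Θ(n^{1/3}). -/

import Mathlib

/-- Flip the `i`-th bit of `x`. -/
def flipBit {n : ℕ} (x : Fin n → Bool) (i : Fin n) : Fin n → Bool :=
  fun j => if j = i then !x j else x j

/-- Flip all bits of `x` in the block `B`. -/
def flipSet {n : ℕ} (x : Fin n → Bool) (B : Finset (Fin n)) : Fin n → Bool :=
  fun j => if j ∈ B then !x j else x j

/-- Sensitivity of `f` at the input `x`. -/
def sensAt {n : ℕ} (f : (Fin n → Bool) → Bool) (x : Fin n → Bool) : ℕ :=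
  (Finset.univ.filter fun i => f (flipBit x i) ≠ f x).card

/-- Sensitivity of `f`. -/
def sens {n : ℕ} (f : (Fin n → Bool) → Bool) : ℕ :=
  Finset.univ.sup fun x => sensAt f x

/-- 0-sensitivity of `f`: max sensitivity over inputs where `f` is 0. -/
def sens0 {n : ℕ} (f : (Fin n → Bool) → Bool) : ℕ :=
  (Finset.univ.filter fun x => f x = false).sup fun x => sensAt f x

/-- 1-sensitivity of `f`: max sensitivity over inputs where `f` is 1. -/
def sens1 {n : ℕ} (f : (Fin n → Bool) → Bool) : ℕ :=
  (Finset.univ.filter fun x => f x = true).sup fun x => sensAt f x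

/-- Block sensitivity of `f` at `x`: the largest number of pairwise disjoint
nonempty blocks each of whose flips changes the value of `f` at `x`. -/
noncomputable def bsensAt {n : ℕ} (f : (Fin n → Bool) → Bool) (x : Fin n → Bool) : ℕ :=
  sSup {r : ℕ | ∃ B : Fin r → Finset (Fin n),
    (∀ j, (B j).Nonempty ∧ f (flipSet x (B j)) ≠ f x) ∧
    ∀ j j', j ≠ j' → Disjoint (B j) (B j')}

/-- Block sensitivity of `f`. -/
noncomputable def bsens {n : ℕ} (f : (Fin n → Bool) → Bool) : ℕ :=
  Finset.univ.sup fun x => bsensAt f x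

/-- The pattern predicate defining `g : {0,1}^{k²} → {0,1}`, reading a word as
`k` blocks of length `k`: block 1 equals `110^{k-2}`, the first five bits of
blocks `2..k` are 1, and the last three bits of block `k` are 1. -/
def GPat (k : ℕ) (z : ℕ → Bool) : Prop :=
  (∀ t < k, z t = decide (t < 2)) ∧
  (∀ j, 1 ≤ j → j < k → ∀ t < 5, z (j * k + t) = true) ∧
  (∀ t, k - 3 ≤ t → t < k → z ((k - 1) * k + t) = true)

open Classical in
/-- The cyclically invariant function `f : {0,1}^n → {0,1}` with
`f(x) = 1` iff `x`, viewed cyclically, contains a contiguous length-`k²`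
substring on which `g` evaluates to 1. -/
noncomputable def cycPatFn (k n : ℕ) (hn : 0 < n) : (Fin n → Bool) → Bool :=
  fun x => decide (∃ ℓ : ℕ, GPat k (fun t => x ⟨(ℓ + t) % n, Nat.mod_lt _ hn⟩))


namespace CycAux

def Cst (k a : ℕ) : Prop := a < k^2 ∧ (a < k ∨ a % k < 5 ∨ k^2 - 3 ≤ a)

instance (k a : ℕ) : Decidable (Cst k a) := by unfold Cst; infer_instance

def pv (k a : ℕ) : Bool := decide (a < 2 ∨ k ≤ a)

lemma pv_true {k a : ℕ} (h : a < 2 ∨ k ≤ a) : pv k a = true := decide_eq_true h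

lemma pv_false {k a : ℕ} (h1 : 2 ≤ a) (h2 : a < k) : pv k a = false :=
  decide_eq_false (by omega)

lemma gpat_iff {k : ℕ} (hk : 8 ≤ k) (z : ℕ → Bool) :
    GPat k z ↔ ∀ a, Cst k a → z a = pv k a := by
  have hkk : k^2 = k*k := sq k
  have h8k : 8*k ≤ k*k := Nat.mul_le_mul_right k hk
  constructor
  · rintro ⟨h1, h2, h3⟩ a ⟨ha, hd⟩
    by_cases hak : a < k
    · rw [h1 a hak]
      unfold pv
      rw [decide_eq_decide]
      omega
    · push_neg at hak
      rcases hd with h | h | h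
      · omega
      · have hj1 : 1 ≤ a / k := (Nat.one_le_div_iff (by omega)).mpr hak
        have hj2 : a / k < k := Nat.div_lt_of_lt_mul (by omega)
        have := h2 (a/k) hj1 hj2 (a % k) h
        rw [Nat.div_add_mod'] at this
        rw [this, pv_true (Or.inr hak)]
      · have hmul : (k-1)*k = k*k - k := by rw [Nat.sub_mul, one_mul]
        have := h3 (a - (k-1)*k) (by omega) (by omega)
        have heq : (k-1)*k + (a - (k-1)*k) = a := by omega
        rw [heq] at this
        rw [this, pv_true (Or.inr hak)]
  · intro h
    have hkle : k ≤ k*k := Nat.le_mul_of_pos_left k (by omega)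
    refine ⟨fun t ht => ?_, fun j hj1 hj2 t ht => ?_, fun t ht1 ht2 => ?_⟩
    · rw [h t ⟨by omega, Or.inl ht⟩]
      unfold pv
      rw [decide_eq_decide]
      omega
    · have hjk : j*k + k ≤ k*k := by
        have h1 : (j+1)*k ≤ k*k := Nat.mul_le_mul_right k (by omega)
        have h2 : (j+1)*k = j*k + k := by ring
        omega
      have hkj : k ≤ j*k := Nat.le_mul_of_pos_left k (by omega)
      have hmod : (j*k+t) % k = t := by
        rw [Nat.mul_add_mod']; exact Nat.mod_eq_of_lt (by omega)
      rw [h (j*k+t) ⟨by omega, Or.inr (Or.inl (by omega))⟩]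
      exact pv_true (Or.inr (by omega))
    · have hmul : (k-1)*k = k*k - k := by rw [Nat.sub_mul, one_mul]
      rw [h ((k-1)*k + t) ⟨by omega, Or.inr (Or.inr (by omega))⟩]
      exact pv_true (Or.inr (by omega))

def occ (k : ℕ) (hpos : 0 < k^3) (x : Fin (k^3) → Bool) (ℓ : ℕ) : Prop :=
  ∀ a, Cst k a → x ⟨(ℓ + a) % k^3, Nat.mod_lt _ hpos⟩ = pv k a

lemma xcongr {k : ℕ} (hpos : 0 < k^3) (x : Fin (k^3) → Bool) {a b : ℕ}
    (h : a % k^3 = b % k^3) :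
    x ⟨a % k^3, Nat.mod_lt _ hpos⟩ = x ⟨b % k^3, Nat.mod_lt _ hpos⟩ := by
  congr 1
  exact Fin.val_injective h

def Conf (k δ a : ℕ) : Prop :=
  Cst k a ∧ δ ≤ a ∧ Cst k (a - δ) ∧ pv k a ≠ pv k (a - δ)

lemma conf_one {k δ a : ℕ} (hk : 8 ≤ k) (hka : k ≤ a) (h2 : a < k^2)
    (hm : a % k < 5 ∨ k^2 - 3 ≤ a) (hl : δ + 2 ≤ a) (hr : a ≤ δ + k - 1) :
    Conf k δ a := by
  have hkk : k^2 = k*k := sq k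
  have h8k : 8*k ≤ k*k := Nat.mul_le_mul_right k hk
  refine ⟨⟨h2, Or.inr hm⟩, by omega, ⟨by omega, Or.inl (by omega)⟩, ?_⟩
  rw [pv_true (Or.inr hka), pv_false (by omega) (by omega)]
  simp

lemma conf_zero {k δ a : ℕ} (hk : 8 ≤ k) (h2 : 2 ≤ a) (h3 : a ≤ k-1)
    (hδ : δ ≤ a) (h0 : a - δ < 2) : Conf k δ a := by
  have hkk : k^2 = k*k := sq k
  have h8k : 8*k ≤ k*k := Nat.mul_le_mul_right k hk
  refine ⟨⟨by omega, Or.inl (by omega)⟩, hδ, ⟨by omega, Or.inl (by omega)⟩, ?_⟩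
  rw [pv_false h2 (by omega), pv_true (Or.inl h0)]
  simp

lemma triple {k δ : ℕ} (hk : 8 ≤ k) (h2 : 2 ≤ δ) (h5 : δ ≤ k^2 - 5) :
    ∃ a₁ a₂ a₃, a₁ < a₂ ∧ a₂ < a₃ ∧ Conf k δ a₁ ∧ Conf k δ a₂ ∧ Conf k δ a₃ := by
  have hkk : k^2 = k*k := sq k
  have h8k : 8*k ≤ k*k := Nat.mul_le_mul_right k hk
  by_cases hB : k^2 - k < δ
  · exact ⟨k^2-3, k^2-2, k^2-1, by omega, by omega,
      conf_one hk (by omega) (by omega) (Or.inr (by omega)) (by omega) (by omega),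
      conf_one hk (by omega) (by omega) (Or.inr (by omega)) (by omega) (by omega),
      conf_one hk (by omega) (by omega) (Or.inr (by omega)) (by omega) (by omega)⟩
  push_neg at hB
  by_cases hs : δ ≤ 4
  · exact ⟨δ, δ+1, k, by omega, by omega,
      conf_zero hk (by omega) (by omega) (by omega) (by omega),
      conf_zero hk (by omega) (by omega) (by omega) (by omega),
      conf_one hk le_rfl (by omega) (Or.inl (by simp [Nat.mod_self])) (by omega) (by omega)⟩
  push_neg at hs
  set q := δ / k with hq
  set r := δ % k with hr
  have hdm : q * k + r = δ := Nat.div_add_mod' δ k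
  have hrk : r < k := Nat.mod_lt _ (by omega)
  have hq1k : (q+1)*k = q*k + k := by ring
  have modk : ∀ m t : ℕ, t < k → (m*k + t) % k = t := fun m t ht => by
    rw [Nat.mul_add_mod']; exact Nat.mod_eq_of_lt ht
  have hkq1 : k ≤ (q+1)*k := Nat.le_mul_of_pos_left k (Nat.succ_pos q)
  have hq0 : r ≤ 4 → k ≤ q*k := by
    intro h
    have h1 : 1 ≤ q := by
      rcases Nat.eq_zero_or_pos q with hz | hz
      · rw [hz] at hdm; simp at hdm; omega
      · exact hz
    exact Nat.le_mul_of_pos_left k h1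
  rcases eq_or_ne r 0 with h0 | h0
  · have hkq := hq0 (by omega)
    exact ⟨q*k+2, q*k+3, q*k+4, by omega, by omega,
      conf_one hk (by omega) (by omega) (Or.inl (by rw [modk q 2 (by omega)]; omega)) (by omega) (by omega),
      conf_one hk (by omega) (by omega) (Or.inl (by rw [modk q 3 (by omega)]; omega)) (by omega) (by omega),
      conf_one hk (by omega) (by omega) (Or.inl (by rw [modk q 4 (by omega)]; omega)) (by omega) (by omega)⟩
  rcases eq_or_ne r 1 with h1 | h1
  · have hkq := hq0 (by omega)
    exact ⟨q*k+3, q*k+4, (q+1)*k, by omega, by omega,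
      conf_one hk (by omega) (by omega) (Or.inl (by rw [modk q 3 (by omega)]; omega)) (by omega) (by omega),
      conf_one hk (by omega) (by omega) (Or.inl (by rw [modk q 4 (by omega)]; omega)) (by omega) (by omega),
      conf_one hk (by omega) (by omega) (Or.inl (by rw [Nat.mul_mod_left]; omega)) (by omega) (by omega)⟩
  rcases eq_or_ne r 2 with h12 | h12
  · have hkq := hq0 (by omega)
    exact ⟨q*k+4, (q+1)*k, (q+1)*k+1, by omega, by omega,
      conf_one hk (by omega) (by omega) (Or.inl (by rw [modk q 4 (by omega)]; omega)) (by omega) (by omega),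
      conf_one hk (by omega) (by omega) (Or.inl (by rw [Nat.mul_mod_left]; omega)) (by omega) (by omega),
      conf_one hk (by omega) (by omega) (Or.inl (by rw [modk (q+1) 1 (by omega)]; omega)) (by omega) (by omega)⟩
  rcases eq_or_ne r (k-1) with hke | hke
  · exact ⟨(q+1)*k+1, (q+1)*k+2, (q+1)*k+3, by omega, by omega,
      conf_one hk (by omega) (by omega) (Or.inl (by rw [modk (q+1) 1 (by omega)]; omega)) (by omega) (by omega),
      conf_one hk (by omega) (by omega) (Or.inl (by rw [modk (q+1) 2 (by omega)]; omega)) (by omega) (by omega),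
      conf_one hk (by omega) (by omega) (Or.inl (by rw [modk (q+1) 3 (by omega)]; omega)) (by omega) (by omega)⟩
  · exact ⟨(q+1)*k, (q+1)*k+1, (q+1)*k+2, by omega, by omega,
      conf_one hk (by omega) (by omega) (Or.inl (by rw [Nat.mul_mod_left]; omega)) (by omega) (by omega),
      conf_one hk (by omega) (by omega) (Or.inl (by rw [modk (q+1) 1 (by omega)]; omega)) (by omega) (by omega),
      conf_one hk (by omega) (by omega) (Or.inl (by rw [modk (q+1) 2 (by omega)]; omega)) (by omega) (by omega)⟩

lemma flipBit_ne {n : ℕ} (x : Fin n → Bool) (i j : Fin n) (h : j ≠ i) :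
    flipBit x i j = x j := by simp [flipBit, h]

lemma flipBit_eq {n : ℕ} (x : Fin n → Bool) (i : Fin n) :
    flipBit x i i = !x i := by simp [flipBit]

lemma occ_mod {k : ℕ} (hpos : 0 < k^3) (x : Fin (k^3) → Bool) (ℓ : ℕ) :
    occ k hpos x ℓ ↔ occ k hpos x (ℓ % k^3) := by
  unfold occ
  constructor <;> intro h a ha
  · rw [xcongr hpos x (Nat.mod_add_mod ℓ (k^3) a)]
    exact h a ha
  · rw [← xcongr hpos x (Nat.mod_add_mod ℓ (k^3) a)]
    exact h a ha

lemma mod_inj {k : ℕ} (hpos : 0 < k^3) {ℓ a b : ℕ} (ha : a < k^3) (hb : b < k^3)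
    (h : (ℓ + a) % k^3 = (ℓ + b) % k^3) : a = b := by
  have h1 : a ≡ b [MOD k^3] := Nat.ModEq.add_left_cancel' ℓ h
  have := h1.eq_of_lt_of_lt ha hb
  exact this

lemma no_close {k : ℕ} (hk : 8 ≤ k) (hpos : 0 < k^3) (x : Fin (k^3) → Bool)
    (ℓ δ : ℕ) (hδ2 : 2 ≤ δ) (hδ : δ ≤ k^2 - 5)
    (e e' : Fin (k^3)) (h1 : occ k hpos (flipBit x e) ℓ)
    (h2 : occ k hpos (flipBit x e') (ℓ + δ)) : False := by
  have hkk : k^2 = k*k := sq k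
  have h8k : 8*k ≤ k*k := Nat.mul_le_mul_right k hk
  have hk2n : k^2 ≤ k^3 := Nat.pow_le_pow_right (by omega) (by omega)
  obtain ⟨a₁, a₂, a₃, h12, h23, hc1, hc2, hc3⟩ := triple hk hδ2 hδ
  have key : ∀ a, Conf k δ a →
      (⟨(ℓ + a) % k^3, Nat.mod_lt _ hpos⟩ : Fin (k^3)) = e ∨
      (⟨(ℓ + a) % k^3, Nat.mod_lt _ hpos⟩ : Fin (k^3)) = e' := by
    rintro a ⟨hca, hda, hcb, hne⟩
    by_contra hcon
    push_neg at hcon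
    have e1 := h1 a hca
    have e2 := h2 (a - δ) hcb
    rw [xcongr hpos (flipBit x e')
      (show (ℓ + δ + (a - δ)) % k^3 = (ℓ + a) % k^3 by rw [show ℓ + δ + (a - δ) = ℓ + a by omega])] at e2
    rw [flipBit_ne _ _ _ hcon.1] at e1
    rw [flipBit_ne _ _ _ hcon.2] at e2
    exact hne (by rw [← e1, ← e2])
  have hd : ∀ a b : ℕ, Conf k δ a → Conf k δ b → a ≠ b →
      (⟨(ℓ + a) % k^3, Nat.mod_lt _ hpos⟩ : Fin (k^3)) ≠
      (⟨(ℓ + b) % k^3, Nat.mod_lt _ hpos⟩ : Fin (k^3)) := by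
    rintro a b ⟨⟨ha, _⟩, _⟩ ⟨⟨hb, _⟩, _⟩ hab hcon
    exact hab (mod_inj hpos (by omega) (by omega) (congrArg Fin.val hcon))
  rcases key a₁ hc1 with k1 | k1 <;> rcases key a₂ hc2 with k2 | k2 <;>
    rcases key a₃ hc3 with k3 | k3
  · exact hd a₁ a₂ hc1 hc2 (by omega) (k1.trans k2.symm)
  · exact hd a₁ a₂ hc1 hc2 (by omega) (k1.trans k2.symm)
  · exact hd a₁ a₃ hc1 hc3 (by omega) (k1.trans k3.symm)
  · exact hd a₂ a₃ hc2 hc3 (by omega) (k2.trans k3.symm)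
  · exact hd a₂ a₃ hc2 hc3 (by omega) (k2.trans k3.symm)
  · exact hd a₁ a₃ hc1 hc3 (by omega) (k1.trans k3.symm)
  · exact hd a₁ a₂ hc1 hc2 (by omega) (k1.trans k2.symm)
  · exact hd a₁ a₂ hc1 hc2 (by omega) (k1.trans k2.symm)

lemma f_true_iff {k : ℕ} (hk : 8 ≤ k) (hpos : 0 < k^3) (x : Fin (k^3) → Bool) :
    cycPatFn k (k^3) hpos x = true ↔ ∃ ℓ, occ k hpos x ℓ := by
  simp only [cycPatFn, decide_eq_true_eq]
  constructor
  · rintro ⟨ℓ, hℓ⟩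
    exact ⟨ℓ, fun a ha => (gpat_iff hk _).mp hℓ a ha⟩
  · rintro ⟨ℓ, hℓ⟩
    exact ⟨ℓ, (gpat_iff hk _).mpr (fun a ha => hℓ a ha)⟩

lemma card_cst {k : ℕ} (hk : 8 ≤ k) :
    ((Finset.range (k^2)).filter (fun a => Cst k a)).card ≤ 6*k+3 := by
  classical
  have hkk : k^2 = k*k := sq k
  have h8k : 8*k ≤ k*k := Nat.mul_le_mul_right k hk
  have hsub : ((Finset.range (k^2)).filter (fun a => Cst k a)) ⊆
      (Finset.range k ∪ (Finset.range k ×ˢ Finset.range 5).image (fun p => p.1*k+p.2))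
        ∪ Finset.Icc (k^2-3) (k^2-1) := by
    intro a ha
    simp only [Finset.mem_filter, Finset.mem_range] at ha
    obtain ⟨har, hc⟩ := ha
    unfold Cst at hc
    obtain ⟨-, hd⟩ := hc
    rcases hd with h | h | h
    · exact Finset.mem_union_left _ (Finset.mem_union_left _ (Finset.mem_range.mpr h))
    · refine Finset.mem_union_left _ (Finset.mem_union_right _ ?_)
      refine Finset.mem_image.mpr ⟨(a / k, a % k), ?_, Nat.div_add_mod' a k⟩
      refine Finset.mem_product.mpr ⟨Finset.mem_range.mpr ?_, Finset.mem_range.mpr h⟩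
      exact Nat.div_lt_of_lt_mul (by omega)
    · exact Finset.mem_union_right _ (Finset.mem_Icc.mpr ⟨h, by omega⟩)
  have h1 := Finset.card_le_card hsub
  have h2 := Finset.card_union_le
    (Finset.range k ∪ (Finset.range k ×ˢ Finset.range 5).image (fun p => p.1*k+p.2))
    (Finset.Icc (k^2-3) (k^2-1))
  have h3 := Finset.card_union_le (Finset.range k)
    ((Finset.range k ×ˢ Finset.range 5).image (fun p => p.1*k+p.2))
  have h4 : ((Finset.range k ×ˢ Finset.range 5).image (fun p : ℕ × ℕ => p.1*k+p.2)).card ≤ k*5 := by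
    have := Finset.card_image_le (s := Finset.range k ×ˢ Finset.range 5)
      (f := fun p : ℕ × ℕ => p.1*k+p.2)
    rwa [Finset.card_product, Finset.card_range, Finset.card_range] at this
  have h5 : (Finset.Icc (k^2-3) (k^2-1)).card = 3 := by
    rw [Nat.card_Icc]; omega
  have h6 : (Finset.range k).card = k := Finset.card_range k
  omega

lemma sensAt_true {k : ℕ} (hk : 8 ≤ k) (hpos : 0 < k^3) (x : Fin (k^3) → Bool)
    (hx : cycPatFn k (k^3) hpos x = true) :
    sensAt (cycPatFn k (k^3) hpos) x ≤ 6*k+3 := by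
  classical
  obtain ⟨ℓ, hocc⟩ := (f_true_iff hk hpos x).mp hx
  set W : Finset (Fin (k^3)) :=
    ((Finset.range (k^2)).filter (fun a => Cst k a)).image
      (fun a => (⟨(ℓ + a) % k^3, Nat.mod_lt _ hpos⟩ : Fin (k^3))) with hW
  have hsub : Finset.univ.filter
      (fun i => cycPatFn k (k^3) hpos (flipBit x i) ≠ cycPatFn k (k^3) hpos x) ⊆ W := by
    intro i hi
    simp only [Finset.mem_filter, Finset.mem_univ, true_and] at hi
    by_contra hiW
    apply hi
    rw [hx]
    rw [f_true_iff hk hpos]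
    refine ⟨ℓ, fun a ha => ?_⟩
    have hmem : (⟨(ℓ + a) % k^3, Nat.mod_lt _ hpos⟩ : Fin (k^3)) ∈ W := by
      rw [hW]
      exact Finset.mem_image.mpr ⟨a, Finset.mem_filter.mpr
        ⟨Finset.mem_range.mpr ha.1, ha⟩, rfl⟩
    have hne : (⟨(ℓ + a) % k^3, Nat.mod_lt _ hpos⟩ : Fin (k^3)) ≠ i := by
      intro he; rw [he] at hmem; exact hiW hmem
    rw [flipBit_ne x i _ hne]
    exact hocc a ha
  calc sensAt (cycPatFn k (k^3) hpos) x ≤ W.card := Finset.card_le_card hsub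
    _ ≤ _ := Finset.card_image_le
    _ ≤ 6*k+3 := card_cst hk

lemma sensAt_false {k : ℕ} (hk : 8 ≤ k) (hpos : 0 < k^3) (x : Fin (k^3) → Bool)
    (hx : cycPatFn k (k^3) hpos x = false) :
    sensAt (cycPatFn k (k^3) hpos) x ≤ 2*(k+1) := by
  classical
  have hkk : k^2 = k*k := sq k
  have h8k : 8*k ≤ k*k := Nat.mul_le_mul_right k hk
  have hnocc : ∀ ℓ, ¬ occ k hpos x ℓ := by
    intro ℓ hℓ
    have h := (f_true_iff hk hpos x).mpr ⟨ℓ, hℓ⟩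
    rw [hx] at h
    exact absurd h (by simp)
  set L : Finset ℕ := (Finset.range (k^3)).filter
      (fun ℓ => ∃ e : Fin (k^3), occ k hpos (flipBit x e) ℓ) with hLdef
  have hLcard : L.card ≤ 2*(k+1) := by
    have hm : 0 < k^2 - 4 := by omega
    have hbi : L ⊆ (Finset.range (k+1)).biUnion
        (fun q => L.filter (fun ℓ => ℓ / (k^2-4) = q)) := by
      intro ℓ hℓ
      refine Finset.mem_biUnion.mpr ⟨ℓ / (k^2-4), Finset.mem_range.mpr ?_,
        Finset.mem_filter.mpr ⟨hℓ, rfl⟩⟩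
      have hln : ℓ < k^3 := Finset.mem_range.mp (Finset.mem_filter.mp hℓ).1
      rw [Nat.div_lt_iff_lt_mul hm]
      have expand : (k+1)*(k^2-4) = k*(k^2-4) + (k^2-4) := by ring
      have e2 : k*(k^2-4) + k*4 = k*k^2 := by
        rw [← Nat.mul_add]
        congr 1
        omega
      have e3 : k*k^2 = k^3 := by ring
      omega
    have hfib : ∀ q, (L.filter (fun ℓ => ℓ / (k^2-4) = q)).card ≤ 2 := by
      intro q
      set S := L.filter (fun ℓ => ℓ / (k^2-4) = q) with hS
      rcases S.eq_empty_or_nonempty with he | hne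
      · rw [he]; simp
      have key : ∀ u v, u ∈ S → v ∈ S → u < v → v = u + 1 := by
        intro u v huS hvS huv
        have hud : u / (k^2-4) = q := (Finset.mem_filter.mp huS).2
        have hvd : v / (k^2-4) = q := (Finset.mem_filter.mp hvS).2
        have hu1 := Nat.div_add_mod' u (k^2-4)
        have hv1 := Nat.div_add_mod' v (k^2-4)
        have hum : u % (k^2-4) < k^2-4 := Nat.mod_lt _ hm
        have hvm : v % (k^2-4) < k^2-4 := Nat.mod_lt _ hm
        have hdiff : v - u ≤ k^2 - 5 := by
          rw [hud] at hu1; rw [hvd] at hv1; omega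
        by_contra hne2
        have h2' : 2 ≤ v - u := by omega
        obtain ⟨e, he⟩ := (Finset.mem_filter.mp ((Finset.mem_filter.mp huS).1)).2
        obtain ⟨e', he'⟩ := (Finset.mem_filter.mp ((Finset.mem_filter.mp hvS).1)).2
        have he'' : occ k hpos (flipBit x e') (u + (v - u)) := by
          rw [show u + (v-u) = v by omega]; exact he'
        exact no_close hk hpos x u (v-u) h2' hdiff e e' he he''
      set m := S.min' hne with hmdef
      have hsub2 : S ⊆ {m, m+1} := by
        intro v hv
        have hmv : m ≤ v := S.min'_le v hv
        rcases eq_or_lt_of_le hmv with h | h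
        · simp [← h]
        · have := key m v (S.min'_mem hne) hv h
          simp [this]
      calc S.card ≤ ({m, m+1} : Finset ℕ).card := Finset.card_le_card hsub2
        _ ≤ 2 := by
            apply le_trans (Finset.card_insert_le _ _)
            simp
    calc L.card ≤ ((Finset.range (k+1)).biUnion
          (fun q => L.filter (fun ℓ => ℓ / (k^2-4) = q))).card := Finset.card_le_card hbi
      _ ≤ ∑ q ∈ Finset.range (k+1), (L.filter (fun ℓ => ℓ / (k^2-4) = q)).card :=
          Finset.card_biUnion_le
      _ ≤ ∑ _q ∈ Finset.range (k+1), 2 := Finset.sum_le_sum (fun q _ => hfib q)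
      _ = 2*(k+1) := by simp [Finset.sum_const, Finset.card_range, mul_comm]
  have hmap : ∀ i : Fin (k^3),
      cycPatFn k (k^3) hpos (flipBit x i) ≠ cycPatFn k (k^3) hpos x →
      ∃ ℓ, occ k hpos (flipBit x i) ℓ := by
    intro i hi
    rw [hx] at hi
    have : cycPatFn k (k^3) hpos (flipBit x i) = true := by
      cases h : cycPatFn k (k^3) hpos (flipBit x i)
      · exact absurd h hi
      · rfl
    exact (f_true_iff hk hpos _).mp this
  set φ : Fin (k^3) → ℕ := fun i =>
    if h : ∃ ℓ, occ k hpos (flipBit x i) ℓ then h.choose % k^3 else 0 with hφ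
  have hmaps : ∀ i ∈ Finset.univ.filter
      (fun i => cycPatFn k (k^3) hpos (flipBit x i) ≠ cycPatFn k (k^3) hpos x), φ i ∈ L := by
    intro i hi
    simp only [Finset.mem_filter, Finset.mem_univ, true_and] at hi
    have h := hmap i hi
    rw [hφ]
    simp only [dif_pos h]
    refine Finset.mem_filter.mpr ⟨Finset.mem_range.mpr (Nat.mod_lt _ hpos), ⟨i, ?_⟩⟩
    exact (occ_mod hpos _ _).mp h.choose_spec
  have hinj : Set.InjOn φ (Finset.univ.filter
      (fun i => cycPatFn k (k^3) hpos (flipBit x i) ≠ cycPatFn k (k^3) hpos x)) := by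
    intro i hi j hj hij
    simp only [Finset.coe_filter, Set.mem_setOf_eq, Finset.mem_univ, true_and] at hi hj
    have hi' := hmap i hi
    have hj' := hmap j hj
    rw [hφ] at hij
    simp only [dif_pos hi', dif_pos hj'] at hij
    have o1 : occ k hpos (flipBit x i) (hi'.choose % k^3) :=
      (occ_mod hpos _ _).mp hi'.choose_spec
    have o2 : occ k hpos (flipBit x j) (hi'.choose % k^3) := by
      rw [hij]
      exact (occ_mod hpos _ _).mp hj'.choose_spec
    have hno := hnocc (hi'.choose % k^3)
    unfold occ at hno
    push_neg at hno
    obtain ⟨a, ha, hxa⟩ := hno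
    have hia : (⟨(hi'.choose % k^3 + a) % k^3, Nat.mod_lt _ hpos⟩ : Fin (k^3)) = i := by
      by_contra hcc
      exact hxa ((flipBit_ne x i _ hcc).symm.trans (o1 a ha))
    have hja : (⟨(hi'.choose % k^3 + a) % k^3, Nat.mod_lt _ hpos⟩ : Fin (k^3)) = j := by
      by_contra hcc
      exact hxa ((flipBit_ne x j _ hcc).symm.trans (o2 a ha))
    rw [← hia, ← hja]
  calc sensAt (cycPatFn k (k^3) hpos) x ≤ L.card :=
      Finset.card_le_card_of_injOn φ hmaps hinj
    _ ≤ 2*(k+1) := hLcard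

lemma sens_upper {k : ℕ} (hk : 8 ≤ k) (hpos : 0 < k^3) :
    sens (cycPatFn k (k^3) hpos) ≤ 6*k+3 := by
  apply Finset.sup_le
  intro x _
  cases hx : cycPatFn k (k^3) hpos x with
  | true => exact sensAt_true hk hpos x hx
  | false => exact le_trans (sensAt_false hk hpos x hx) (by omega)

def IsOne (k w : ℕ) : Prop :=
  w < 2 ∨ (k ≤ w ∧ w < k^2 ∧ w % k < 5) ∨ (k^2 - 3 ≤ w ∧ w < k^2)

instance (k w : ℕ) : Decidable (IsOne k w) := by unfold IsOne; infer_instance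

def x0 (k : ℕ) : Fin (k^3) → Bool := fun w => decide (IsOne k w.val)

lemma y_true {k : ℕ} {i : Fin (k^3)} (hi : ¬ IsOne k i.val) (w : Fin (k^3)) :
    flipBit (x0 k) i w = true ↔ (IsOne k w.val ∨ w = i) := by
  by_cases hw : w = i
  · subst hw
    simp [flipBit, x0, hi]
  · simp [flipBit, hw, x0]

lemma not_isone_p {k p : ℕ} (hk : 8 ≤ k) (hp2 : 2 ≤ p) (hpk : p ≤ k - 1) :
    ¬ IsOne k p := by
  have hkk : k^2 = k*k := sq k
  have h8k : 8*k ≤ k*k := Nat.mul_le_mul_right k hk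
  unfold IsOne
  omega

lemma run_class {k : ℕ} (hk : 8 ≤ k) (hpos : 0 < k^3) {i : Fin (k^3)}
    (hp2 : 2 ≤ i.val) (hpk : i.val ≤ k - 1) {v : ℕ} (hv : v < k^3)
    (hrun : ∀ t, t < 5 →
      flipBit (x0 k) i ⟨(v + t) % k^3, Nat.mod_lt _ hpos⟩ = true) :
    (∃ j, 1 ≤ j ∧ j ≤ k - 1 ∧ v = j * k) ∨ (k^2 - 7 ≤ v ∧ v ≤ k^2 - 5) ∨
      (v = k - 1 ∧ i.val = k - 1) := by
  have hkk : k^2 = k*k := sq k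
  have h8k : 8*k ≤ k*k := Nat.mul_le_mul_right k hk
  have hk3 : k^3 = k * k^2 := by ring
  have h8kk : 8*k^2 ≤ k*k^2 := Nat.mul_le_mul_right (k^2) hk
  have hPnot := not_isone_p hk hp2 hpk
  -- step 1 : v + 4 < k^3
  have hstep1 : v + 4 < k^3 := by
    by_contra hbig
    push_neg at hbig
    have ht : k^3 - 1 - v < 5 := by omega
    have := hrun (k^3 - 1 - v) ht
    rw [y_true hPnot] at this
    have hval : (v + (k^3 - 1 - v)) % k^3 = k^3 - 1 := by
      rw [show v + (k^3 - 1 - v) = k^3 - 1 by omega]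
      exact Nat.mod_eq_of_lt (by omega)
    rcases this with h | h
    · have h' : IsOne k ((v + (k^3 - 1 - v)) % k^3) := h
      rw [hval] at h'
      unfold IsOne at h'
      omega
    · have h' : (v + (k^3 - 1 - v)) % k^3 = i.val := congrArg Fin.val h
      rw [hval] at h'
      omega
  have hT : ∀ t, t < 5 → IsOne k (v + t) ∨ v + t = i.val := by
    intro t ht
    have := hrun t ht
    rw [y_true hPnot] at this
    rcases this with h | h
    · left
      have h' : IsOne k ((v + t) % k^3) := h
      rwa [Nat.mod_eq_of_lt (by omega)] at h'
    · right
      have h' : (v + t) % k^3 = i.val := congrArg Fin.val h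
      rwa [Nat.mod_eq_of_lt (by omega)] at h'
  -- step 2 : v ≤ k^2 - 5
  have hstep2 : v ≤ k^2 - 5 := by
    have := hT 4 (by omega)
    rcases this with h | h
    · unfold IsOne at h; omega
    · omega
  by_cases hvk : v < k
  · -- small case
    right; right
    by_cases hsm : v + 4 < k
    · exfalso
      have h2 := hT 2 (by omega)
      have h3 := hT 3 (by omega)
      rcases h2 with h2 | h2
      · unfold IsOne at h2; omega
      · rcases h3 with h3 | h3
        · unfold IsOne at h3; omega
        · omega
    · push_neg at hsm
      have h0 := hT 0 (by omega)
      simp only [Nat.add_zero] at h0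
      have h0' : v = i.val := by
        rcases h0 with h | h
        · unfold IsOne at h; omega
        · omega
      by_cases hv2 : v ≤ k - 2
      · exfalso
        have h1 := hT 1 (by omega)
        rcases h1 with h | h
        · unfold IsOne at h; omega
        · omega
      · omega
  · push_neg at hvk
    by_cases hmod : v % k = 0
    · left
      have hdm := Nat.div_add_mod' v k
      refine ⟨v / k, ?_, ?_, by omega⟩
      · have := (Nat.one_le_div_iff (show 0 < k by omega)).mpr hvk
        omega
      · have : v / k < k := Nat.div_lt_of_lt_mul (by omega)
        omega
    · right; left
      have hdm := Nat.div_add_mod' v k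
      have hrvk : v % k < k := Nat.mod_lt _ (by omega)
      by_cases hrv5 : v % k < 5
      · have hw : v + (5 - v % k) = v / k * k + 5 := by omega
        have hwm : (v / k * k + 5) % k = 5 := by
          rw [Nat.mul_add_mod']
          exact Nat.mod_eq_of_lt (by omega)
        have ht5 := hT (5 - v % k) (by omega)
        rcases ht5 with h | h
        · unfold IsOne at h
          rw [hw] at h
          rw [hwm] at h
          omega
        · omega
      · have ht0 := hT 0 (by omega)
        simp only [Nat.add_zero] at ht0
        rcases ht0 with h | h
        · unfold IsOne at h
          omega
        · omega

lemma occ_x0 {k : ℕ} (hk : 8 ≤ k) (hpos : 0 < k^3) : occ k hpos (x0 k) 0 := by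
  have hkk : k^2 = k*k := sq k
  have h8k : 8*k ≤ k*k := Nat.mul_le_mul_right k hk
  have hk3 : k^3 = k * k^2 := by ring
  have h8kk : 8*k^2 ≤ k*k^2 := Nat.mul_le_mul_right (k^2) hk
  intro a ha
  obtain ⟨ha2, hd⟩ := ha
  have hmod : (0 + a) % k^3 = a := by
    rw [Nat.zero_add]
    exact Nat.mod_eq_of_lt (by omega)
  unfold x0
  simp only [hmod]
  by_cases h2 : a < 2
  · rw [pv_true (Or.inl h2)]
    exact decide_eq_true (Or.inl h2)
  · by_cases hka : k ≤ a
    · rw [pv_true (Or.inr hka)]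
      apply decide_eq_true
      rcases hd with h | h | h
      · omega
      · exact Or.inr (Or.inl ⟨hka, ha2, h⟩)
      · exact Or.inr (Or.inr ⟨h, ha2⟩)
    · rw [pv_false (by omega) (by omega)]
      apply decide_eq_false
      unfold IsOne
      omega

lemma flip_no_occ {k : ℕ} (hk : 8 ≤ k) (hpos : 0 < k^3) {i : Fin (k^3)}
    (hp2 : 2 ≤ i.val) (hpk : i.val ≤ k - 1) (ℓ : ℕ)
    (hocc : occ k hpos (flipBit (x0 k) i) ℓ) : False := by
  have hkk : k^2 = k*k := sq k
  have h8k : 8*k ≤ k*k := Nat.mul_le_mul_right k hk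
  have hk3 : k^3 = k * k^2 := by ring
  have h8kk : 8*k^2 ≤ k*k^2 := Nat.mul_le_mul_right (k^2) hk
  have hPnot := not_isone_p hk hp2 hpk
  have hoccm : occ k hpos (flipBit (x0 k) i) (ℓ % k^3) := (occ_mod hpos _ _).mp hocc
  set m := ℓ % k^3 with hm
  clear_value m
  have hmn : m < k^3 := by rw [hm]; exact Nat.mod_lt _ hpos
  have hrun1 : ∀ t, t < 5 →
      flipBit (x0 k) i ⟨((m + k) % k^3 + t) % k^3, Nat.mod_lt _ hpos⟩ = true := by
    intro t ht
    have hcst : Cst k (k + t) := ⟨by omega, Or.inr (Or.inl (by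
      rw [Nat.add_mod_left]; rw [Nat.mod_eq_of_lt (show t < k by omega)]; omega))⟩
    have h := hoccm (k + t) hcst
    rw [pv_true (Or.inr (by omega))] at h
    rw [xcongr hpos (flipBit (x0 k) i)
      (show ((m + k) % k^3 + t) % k^3 = (m + (k + t)) % k^3 by
        rw [Nat.mod_add_mod]; congr 1; omega)]
    exact h
  have hrun2 : ∀ t, t < 5 →
      flipBit (x0 k) i ⟨((m + 2*k) % k^3 + t) % k^3, Nat.mod_lt _ hpos⟩ = true := by
    intro t ht
    have hcst : Cst k (2*k + t) := ⟨by omega, Or.inr (Or.inl (by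
      rw [Nat.mul_add_mod']; rw [Nat.mod_eq_of_lt (show t < k by omega)]; omega))⟩
    have h := hoccm (2*k + t) hcst
    rw [pv_true (Or.inr (by omega))] at h
    rw [xcongr hpos (flipBit (x0 k) i)
      (show ((m + 2*k) % k^3 + t) % k^3 = (m + (2*k + t)) % k^3 by
        rw [Nat.mod_add_mod]; congr 1; omega)]
    exact h
  have hc1 := run_class hk hpos hp2 hpk (Nat.mod_lt (m+k) hpos) hrun1
  have hc2 := run_class hk hpos hp2 hpk (Nat.mod_lt (m+2*k) hpos) hrun2
  rcases hc1 with ⟨j, hj1, hj2, hjv⟩ | ⟨hv1, hv2⟩ | ⟨hv1, hvi⟩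
  · -- (m+k)%k^3 = j*k
    have hjk1 : k ≤ j*k := Nat.le_mul_of_pos_left k (by omega)
    have hjk2 : j*k ≤ (k-1)*k := Nat.mul_le_mul_right k hj2
    have hsub : (k-1)*k = k*k - k := by rw [Nat.sub_mul, one_mul]
    have hmeq : m = j*k - k := by
      rcases (show m + k < k^3 ∨ k^3 ≤ m + k by omega) with hlt | hge
      · rw [Nat.mod_eq_of_lt hlt] at hjv; omega
      · have h := (Nat.mod_eq_sub_mod hge).trans
          (Nat.mod_eq_of_lt (show m + k - k^3 < k^3 by omega))
        rw [h] at hjv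
        omega
    by_cases hj1' : j = 1
    · subst hj1'
      have hm0 : m = 0 := by omega
      have hcp : Cst k i.val := ⟨by omega, Or.inl (by omega)⟩
      have h := hoccm i.val hcp
      rw [pv_false (by omega) (by omega)] at h
      have hfin : (⟨(m + i.val) % k^3, Nat.mod_lt _ hpos⟩ : Fin (k^3)) = i :=
        Fin.val_injective (show (m + i.val) % k^3 = i.val by
          rw [hm0, Nat.zero_add]; exact Nat.mod_eq_of_lt (by omega))
      have hcontr : flipBit (x0 k) i ⟨(m + i.val) % k^3, Nat.mod_lt _ hpos⟩ = true := by
        rw [y_true hPnot]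
        right
        exact hfin
      rw [hcontr] at h
      simp at h
    · have hcst2 : Cst k 2 := ⟨by omega, Or.inl (by omega)⟩
      have h2' := hoccm 2 hcst2
      rw [pv_false (by omega) (by omega)] at h2'
      have hj1k : k ≤ (j-1)*k := Nat.le_mul_of_pos_left k (by omega)
      have hj2k : (j-1)*k ≤ (k-2)*k := Nat.mul_le_mul_right k (by omega)
      have hsub2 : (k-2)*k = k*k - 2*k := Nat.sub_mul k 2 k
      have hj1e : (j-1)*k = j*k - k := by rw [Nat.sub_mul, one_mul]
      have hval : (m + 2) % k^3 = (j-1)*k + 2 := by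
        rw [Nat.mod_eq_of_lt (by omega)]
        omega
      have hiso : IsOne k ((j-1)*k + 2) := by
        refine Or.inr (Or.inl ⟨by omega, by omega, ?_⟩)
        rw [Nat.mul_add_mod']
        rw [Nat.mod_eq_of_lt (show 2 < k by omega)]
        omega
      have hcontr : flipBit (x0 k) i ⟨(m + 2) % k^3, Nat.mod_lt _ hpos⟩ = true := by
        rw [y_true hPnot]
        left
        show IsOne k ((m + 2) % k^3)
        rw [hval]
        exact hiso
      rw [hcontr] at h2'
      simp at h2'
  · -- mid case
    have hv2eq : (m + 2*k) % k^3 = (m + k) % k^3 + k := by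
      have hb1 : (m + k) % k^3 < k^3 := Nat.mod_lt _ hpos
      have h1 : ((m + k) % k^3 + k) % k^3 = (m + 2*k) % k^3 := by
        rw [Nat.mod_add_mod, show m + k + k = m + 2*k by omega]
      rw [← h1]
      exact Nat.mod_eq_of_lt (by omega)
    rcases hc2 with ⟨j, hj1, hj2, hjv⟩ | ⟨hw1, hw2⟩ | ⟨hw1, -⟩
    · have hjk2 : j*k ≤ (k-1)*k := Nat.mul_le_mul_right k hj2
      have hsub : (k-1)*k = k*k - k := by rw [Nat.sub_mul, one_mul]
      rw [hv2eq] at hjv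
      omega
    · rw [hv2eq] at hw1 hw2
      omega
    · rw [hv2eq] at hw1
      omega
  · -- v1 = k-1
    have hmeq : m = k^3 - 1 := by
      rcases (show m + k < k^3 ∨ k^3 ≤ m + k by omega) with hlt | hge
      · rw [Nat.mod_eq_of_lt hlt] at hv1; omega
      · have h := (Nat.mod_eq_sub_mod hge).trans
          (Nat.mod_eq_of_lt (show m + k - k^3 < k^3 by omega))
        rw [h] at hv1
        omega
    have hv2eq : (m + 2*k) % k^3 = 2*k - 1 := by
      rw [hmeq]
      rw [show k^3 - 1 + 2*k = k^3 + (2*k - 1) by omega]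
      rw [Nat.add_mod_left]
      exact Nat.mod_eq_of_lt (by omega)
    rcases hc2 with ⟨j, hj1, hj2, hjv⟩ | ⟨hw1, hw2⟩ | ⟨hw1, -⟩
    · rw [hv2eq] at hjv
      have h0 : (j*k) % k = 0 := Nat.mul_mod_left j k
      have h1 : (2*k - 1) % k = k - 1 := by
        rw [show 2*k - 1 = k + (k-1) by omega, Nat.add_mod_left]
        exact Nat.mod_eq_of_lt (by omega)
      rw [hjv] at h1
      omega
    · rw [hv2eq] at hw1
      omega
    · rw [hv2eq] at hw1
      omega

lemma sens_lower {k : ℕ} (hk : 8 ≤ k) (hpos : 0 < k^3) :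
    k - 2 ≤ sens (cycPatFn k (k^3) hpos) := by
  classical
  have hkk : k^2 = k*k := sq k
  have h8k : 8*k ≤ k*k := Nat.mul_le_mul_right k hk
  have hk3 : k^3 = k * k^2 := by ring
  have h8kk : 8*k^2 ≤ k*k^2 := Nat.mul_le_mul_right (k^2) hk
  have hfx0 : cycPatFn k (k^3) hpos (x0 k) = true :=
    (f_true_iff hk hpos _).mpr ⟨0, occ_x0 hk hpos⟩
  have hsub : (Finset.Icc 2 (k-1)).image
      (fun p => (⟨p % k^3, Nat.mod_lt _ hpos⟩ : Fin (k^3))) ⊆ Finset.univ.filter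
      (fun i => cycPatFn k (k^3) hpos (flipBit (x0 k) i) ≠
        cycPatFn k (k^3) hpos (x0 k)) := by
    intro i hi
    obtain ⟨p, hp, rfl⟩ := Finset.mem_image.mp hi
    rw [Finset.mem_Icc] at hp
    have hplt : p < k^3 := by omega
    have hpm : p % k^3 = p := Nat.mod_eq_of_lt hplt
    have hfalse : cycPatFn k (k^3) hpos
        (flipBit (x0 k) ⟨p % k^3, Nat.mod_lt _ hpos⟩) = false := by
      rw [Bool.eq_false_iff]
      intro htrue
      obtain ⟨ℓ, hocc⟩ := (f_true_iff hk hpos _).mp htrue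
      exact flip_no_occ hk hpos (i := ⟨p % k^3, Nat.mod_lt _ hpos⟩)
        (show 2 ≤ p % k^3 by omega) (show p % k^3 ≤ k - 1 by omega) ℓ hocc
    rw [Finset.mem_filter]
    refine ⟨Finset.mem_univ _, ?_⟩
    rw [hfalse, hfx0]
    simp
  have hinj : Set.InjOn (fun p : ℕ => (⟨p % k^3, Nat.mod_lt _ hpos⟩ : Fin (k^3)))
      (Finset.Icc 2 (k-1)) := by
    intro a ha b hb hab
    simp only [Finset.coe_Icc, Set.mem_Icc] at ha hb
    have h := congrArg Fin.val hab
    simp only [Nat.mod_eq_of_lt (show a < k^3 by omega),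
      Nat.mod_eq_of_lt (show b < k^3 by omega)] at h
    exact h
  have hScard : ((Finset.Icc 2 (k-1)).image
      (fun p => (⟨p % k^3, Nat.mod_lt _ hpos⟩ : Fin (k^3)))).card = k - 2 := by
    rw [Finset.card_image_of_injOn hinj, Nat.card_Icc]
    omega
  calc k - 2 = ((Finset.Icc 2 (k-1)).image
        (fun p => (⟨p % k^3, Nat.mod_lt _ hpos⟩ : Fin (k^3)))).card := hScard.symm
    _ ≤ (Finset.univ.filter
        (fun i => cycPatFn k (k^3) hpos (flipBit (x0 k) i) ≠
          cycPatFn k (k^3) hpos (x0 k))).card := Finset.card_le_card hsub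
    _ = sensAt (cycPatFn k (k^3) hpos) (x0 k) := rfl
    _ ≤ sens (cycPatFn k (k^3) hpos) := Finset.le_sup (Finset.mem_univ _)

end CycAux

/-- With `n = k³`, the cyclically invariant pattern function has sensitivity
`Θ(n^{1/3})`. -/
theorem cycPatFn_sens_theta_cbrt :
    ∃ c₁ : ℝ, 0 < c₁ ∧ ∃ c₂ : ℝ, 0 < c₂ ∧
      ∀ (k : ℕ) (h8 : 8 ≤ k) (hpos : 0 < k ^ 3),
        c₁ * ((k ^ 3 : ℕ) : ℝ) ^ ((1 : ℝ) / 3) ≤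
            (sens (cycPatFn k (k ^ 3) hpos) : ℝ) ∧
          (sens (cycPatFn k (k ^ 3) hpos) : ℝ) ≤
            c₂ * ((k ^ 3 : ℕ) : ℝ) ^ ((1 : ℝ) / 3) := by
  refine ⟨1/2, by norm_num, 7, by norm_num, ?_⟩
  intro k h8 hpos
  have hcb : ((k ^ 3 : ℕ) : ℝ) ^ ((1 : ℝ) / 3) = (k : ℝ) := by
    have hk0 : (0:ℝ) ≤ (k:ℝ) := Nat.cast_nonneg k
    push_cast
    rw [← Real.rpow_natCast (k:ℝ) 3, ← Real.rpow_mul hk0]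
    norm_num
  rw [hcb]
  have hlow := CycAux.sens_lower h8 hpos
  have hup := CycAux.sens_upper h8 hpos
  have hk8 : (8:ℝ) ≤ (k:ℝ) := by exact_mod_cast h8
  constructor
  · have h1 : ((k - 2 : ℕ) : ℝ) ≤ (sens (cycPatFn k (k^3) hpos) : ℝ) := Nat.cast_le.mpr hlow
    have h2k : 2 ≤ k := by omega
    rw [Nat.cast_sub h2k] at h1
    push_cast at h1
    linarith
  · have h1 : (sens (cycPatFn k (k^3) hpos) : ℝ) ≤ ((6*k+3 : ℕ) : ℝ) := Nat.cast_le.mpr hup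
    push_cast at h1
    linarith
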